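/- Let μ = N(α, Σ) be a Gaussian measure on ℝ^d and A = KᵀQ. Then the Softmax self-attention velocity field satisfies Γ_μ(x) = ∫ V·y · e^{Qx·Ky} dμ(y) / ∫ e^{Qx·Ky} dμ(y) = V(α + Σ A x) for all x ∈ ℝ^d. -/

import Mathlib

open MeasureTheory Matrix Real

/-- ε-lower bound for a positive definite quadratic form. -/
lemma quad_lower_bound {d : ℕ} (M : Matrix (Fin d) (Fin d) ℝ) (hM : M.PosDef) :
    ∃ ε > 0, ∀ z : Fin d → ℝ, ε * (∑ i, z i ^ 2) ≤ z ⬝ᵥ M.mulVec z := by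
  have hpos : ∀ z : Fin d → ℝ, z ≠ 0 → 0 < z ⬝ᵥ M.mulVec z := by
    intro z hz
    have := hM.dotProduct_mulVec_pos hz
    simpa using this
  rcases Nat.eq_zero_or_pos d with hd | hd
  · subst hd
    exact ⟨1, one_pos, fun z => by simp [dotProduct]⟩
  · set Sph : Set (Fin d → ℝ) := {z | ∑ i, z i ^ 2 = 1} with hSph
    have hq_cont : Continuous fun z : Fin d → ℝ => z ⬝ᵥ M.mulVec z :=
      continuous_id.dotProduct (continuous_const.matrix_mulVec continuous_id)
    have hclosed : IsClosed Sph := isClosed_eq (by continuity) continuous_const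
    have hbdd : Bornology.IsBounded Sph := by
      apply Bornology.IsBounded.subset (Metric.isBounded_closedBall (x := (0 : Fin d → ℝ)) (r := 1))
      intro z hz
      simp only [Metric.mem_closedBall, dist_zero_right]
      rw [pi_norm_le_iff_of_nonneg zero_le_one]
      intro i
      have h1 : z i ^ 2 ≤ 1 := by
        rw [← hz]
        exact Finset.single_le_sum (fun j _ => sq_nonneg (z j)) (Finset.mem_univ i)
      rw [Real.norm_eq_abs]
      exact abs_le_one_iff_mul_self_le_one.2 (by nlinarith)
    have hne : Sph.Nonempty := by
      refine ⟨Pi.single ⟨0, hd⟩ 1, ?_⟩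
      simp [hSph, Pi.single_apply, ite_pow]
    have hcpt : IsCompact Sph := Metric.isCompact_of_isClosed_isBounded hclosed hbdd
    obtain ⟨z0, hz0S, hmin⟩ := hcpt.exists_isMinOn hne hq_cont.continuousOn
    have hz0ne : z0 ≠ 0 := by
      intro h
      rw [h] at hz0S
      simp [hSph] at hz0S
    refine ⟨z0 ⬝ᵥ M.mulVec z0, hpos z0 hz0ne, fun z => ?_⟩
    by_cases hz : z = 0
    · simp [hz, dotProduct]
    · set ε := z0 ⬝ᵥ M.mulVec z0
      have hs0 : 0 < ∑ i, z i ^ 2 := by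
        obtain ⟨i, hi⟩ := Function.ne_iff.mp hz
        have hi' : z i ≠ 0 := by simpa using hi
        exact Finset.sum_pos' (fun j _ => sq_nonneg (z j))
          ⟨i, Finset.mem_univ i, by rcases hi'.lt_or_gt with h | h <;> nlinarith⟩
      set r := Real.sqrt (∑ i, z i ^ 2) with hr
      have hrpos : 0 < r := Real.sqrt_pos.2 hs0
      have hr2 : r ^ 2 = ∑ i, z i ^ 2 := Real.sq_sqrt hs0.le
      have hu : (r⁻¹ • z) ∈ Sph := by
        simp only [hSph, Set.mem_setOf_eq, Pi.smul_apply, smul_eq_mul, mul_pow,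
          ← Finset.mul_sum]
        rw [← hr2]
        field_simp
      have hkey : ε ≤ (r⁻¹ • z) ⬝ᵥ M.mulVec (r⁻¹ • z) := isMinOn_iff.mp hmin _ hu
      have hexp : (r⁻¹ • z) ⬝ᵥ M.mulVec (r⁻¹ • z) = r⁻¹ ^ 2 * (z ⬝ᵥ M.mulVec z) := by
        rw [Matrix.mulVec_smul, smul_dotProduct, dotProduct_smul]
        simp [smul_eq_mul]
        ring
      rw [hexp] at hkey
      calc ε * (∑ i, z i ^ 2) = ε * r ^ 2 := by rw [hr2]
        _ ≤ (r⁻¹ ^ 2 * (z ⬝ᵥ M.mulVec z)) * r ^ 2 :=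
            mul_le_mul_of_nonneg_right hkey (sq_nonneg r)
        _ = z ⬝ᵥ M.mulVec z := by field_simp

/-- Integrability of the (unnormalized) Gaussian density and of its product with `z`. -/
lemma gauss_integrable {d : ℕ} (M : Matrix (Fin d) (Fin d) ℝ) (hM : M.PosDef) :
    Integrable (fun z : Fin d → ℝ => Real.exp (-(1/2 : ℝ) * (z ⬝ᵥ M.mulVec z))) ∧
    Integrable (fun z : Fin d → ℝ => Real.exp (-(1/2 : ℝ) * (z ⬝ᵥ M.mulVec z)) • z) := by
  obtain ⟨ε, hε, hbound⟩ := quad_lower_bound M hM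
  set c := ε / 2 with hc
  have hc0 : 0 < c := by positivity
  have hq_cont : Continuous fun z : Fin d → ℝ => z ⬝ᵥ M.mulVec z :=
    continuous_id.dotProduct (continuous_const.matrix_mulVec continuous_id)
  have hg_cont : Continuous fun z : Fin d → ℝ => Real.exp (-(1/2 : ℝ) * (z ⬝ᵥ M.mulVec z)) :=
    (continuous_const.mul hq_cont).rexp
  have key : ∀ z : Fin d → ℝ,
      Real.exp (-(1/2 : ℝ) * (z ⬝ᵥ M.mulVec z)) ≤ ∏ j, Real.exp (-c * z j ^ 2) := by
    intro z
    rw [← Real.exp_sum]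
    apply Real.exp_le_exp.2
    have h1 := hbound z
    have h2 : ∑ j, -c * z j ^ 2 = -c * ∑ j, z j ^ 2 := by rw [← Finset.mul_sum]
    rw [h2, hc]
    linarith
  constructor
  · refine Integrable.mono'
      (Integrable.fintype_prod (f := fun _ (v : ℝ) => Real.exp (-c * v ^ 2))
        (fun _ => integrable_exp_neg_mul_sq hc0))
      hg_cont.aestronglyMeasurable ?_
    filter_upwards with z
    rw [Real.norm_eq_abs, Real.abs_exp]
    exact key z
  · have hD : Integrable (fun z : Fin d → ℝ =>
        ∑ i, ∏ j, (Real.exp (-c * z j ^ 2) * (if j = i then |z j| else 1))) := by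
      refine integrable_finset_sum _ (fun i _ => ?_)
      refine Integrable.fintype_prod
        (f := fun j (v : ℝ) => Real.exp (-c * v ^ 2) * (if j = i then |v| else 1))
        (fun j => ?_)
      by_cases hji : j = i
      · simp only [hji, if_true]
        have h3 := (integrable_mul_exp_neg_mul_sq hc0).abs
        refine h3.congr ?_
        filter_upwards with v
        rw [abs_mul, Real.abs_exp, mul_comm]
      · simp only [hji, if_false, mul_one]
        exact integrable_exp_neg_mul_sq hc0
    refine Integrable.mono' hD ((hg_cont.smul continuous_id).aestronglyMeasurable) ?_
    filter_upwards with z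
    rw [norm_smul, Real.norm_eq_abs, Real.abs_exp]
    have hz_norm : ‖z‖ ≤ ∑ i, |z i| := by
      rw [pi_norm_le_iff_of_nonneg (Finset.sum_nonneg fun i _ => abs_nonneg (z i))]
      intro i
      rw [Real.norm_eq_abs]
      exact Finset.single_le_sum (fun j _ => abs_nonneg (z j)) (Finset.mem_univ i)
    calc Real.exp (-(1/2 : ℝ) * (z ⬝ᵥ M.mulVec z)) * ‖z‖
        ≤ (∏ j, Real.exp (-c * z j ^ 2)) * ∑ i, |z i| := by
          apply mul_le_mul (key z) hz_norm (norm_nonneg z)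
          exact Finset.prod_nonneg fun j _ => (Real.exp_pos _).le
      _ = ∑ i, ∏ j, (Real.exp (-c * z j ^ 2) * (if j = i then |z j| else 1)) := by
          rw [Finset.mul_sum]
          refine Finset.sum_congr rfl (fun i _ => ?_)
          rw [Finset.prod_mul_distrib, Finset.prod_ite_eq' Finset.univ i (fun j => |z j|)]
          simp

/-- For a Gaussian measure `μ = N(α, Σ)` on `ℝ^d` (written here through its unnormalized
density `g` with respect to Lebesgue measure) and `A = KᵀQ`, the Softmax self-attention
velocity field satisfies
`Γ_μ(x) = ∫ V y e^{Qx·Ky} dμ(y) / ∫ e^{Qx·Ky} dμ(y) = V (α + Σ A x)`,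
stated as: numerator = denominator • V(α + ΣAx). -/
theorem stmt_3 (d k : ℕ) (Q K : Matrix (Fin k) (Fin d) ℝ) (V : Matrix (Fin d) (Fin d) ℝ)
    (α : Fin d → ℝ) (S : Matrix (Fin d) (Fin d) ℝ) (hS : S.PosDef)
    (A : Matrix (Fin d) (Fin d) ℝ) (hA : A = Kᵀ * Q)
    (g : (Fin d → ℝ) → ℝ)
    (hg : ∀ y, g y = Real.exp (-(1 / 2 : ℝ) * ((y - α) ⬝ᵥ S⁻¹.mulVec (y - α)))) :
    ∀ x : Fin d → ℝ,
      (∫ y : Fin d → ℝ, (Real.exp (Q.mulVec x ⬝ᵥ K.mulVec y) * g y) • V.mulVec y) =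
        (∫ y : Fin d → ℝ, Real.exp (Q.mulVec x ⬝ᵥ K.mulVec y) * g y) •
          V.mulVec (α + S.mulVec (A.mulVec x)) := by
  intro x
  set M := S⁻¹ with hMdef
  have hM : M.PosDef := hS.inv
  have hMt : Mᵀ = M := by
    rw [← Matrix.conjTranspose_eq_transpose_of_trivial]
    exact hM.1
  have hMs : ∀ u v : Fin d → ℝ, u ⬝ᵥ M.mulVec v = v ⬝ᵥ M.mulVec u := by
    intro u v
    rw [dotProduct_mulVec, ← Matrix.mulVec_transpose, hMt, dotProduct_comm]
  set b := A.mulVec x with hbdef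
  have hb : ∀ y : Fin d → ℝ, Q.mulVec x ⬝ᵥ K.mulVec y = b ⬝ᵥ y := by
    intro y
    rw [dotProduct_mulVec, ← Matrix.mulVec_transpose, hbdef, hA, ← Matrix.mulVec_mulVec]
  set α' := α + S.mulVec b with hα'
  have hSb : M.mulVec (S.mulVec b) = b := by
    rw [Matrix.mulVec_mulVec, hMdef, Matrix.nonsing_inv_mul S hS.det_pos.ne'.isUnit,
      Matrix.one_mulVec]
  set C := Real.exp (b ⬝ᵥ α + (1/2 : ℝ) * (b ⬝ᵥ S.mulVec b)) with hC
  set G : (Fin d → ℝ) → ℝ :=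
    fun y => Real.exp (-(1/2 : ℝ) * ((y - α') ⬝ᵥ M.mulVec (y - α'))) with hG
  set g0 : (Fin d → ℝ) → ℝ :=
    fun z => Real.exp (-(1/2 : ℝ) * (z ⬝ᵥ M.mulVec z)) with hg0
  have hkey : ∀ y : Fin d → ℝ, Real.exp (Q.mulVec x ⬝ᵥ K.mulVec y) * g y = C * G y := by
    intro y
    rw [hg, hb, hG, hC, ← Real.exp_add, ← Real.exp_add]
    congr 1
    have h1 : y - α' = (y - α) - S.mulVec b := by rw [hα']; abel
    have expand : (y - α') ⬝ᵥ M.mulVec (y - α')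
        = (y - α) ⬝ᵥ M.mulVec (y - α) - 2 * (b ⬝ᵥ (y - α)) + b ⬝ᵥ S.mulVec b := by
      rw [h1, Matrix.mulVec_sub, sub_dotProduct, dotProduct_sub, dotProduct_sub, hSb,
        hMs (S.mulVec b) (y - α), hSb, dotProduct_comm (y - α) b, dotProduct_comm (S.mulVec b) b]
      ring
    have hby : b ⬝ᵥ y = b ⬝ᵥ (y - α) + b ⬝ᵥ α := by rw [dotProduct_sub]; ring
    rw [expand, hby]
    ring
  simp only [hkey]
  have hint := gauss_integrable M hM
  have hodd : (∫ z : Fin d → ℝ, g0 z • z) = 0 := by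
    have h1 : (∫ z : Fin d → ℝ, g0 (-z) • (-z)) = ∫ z : Fin d → ℝ, g0 z • z :=
      integral_neg_eq_self (fun z : Fin d → ℝ => g0 z • z) volume
    have h2 : ∀ z : Fin d → ℝ, g0 (-z) • (-z) = -(g0 z • z) := by
      intro z
      have : g0 (-z) = g0 z := by
        rw [hg0]
        simp only [Matrix.mulVec_neg, dotProduct_neg, neg_dotProduct, neg_neg]
      rw [this, smul_neg]
    simp only [h2, integral_neg] at h1
    have h3 : (∫ z : Fin d → ℝ, g0 z • z) + (∫ z : Fin d → ℝ, g0 z • z) = 0 :=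
      eq_neg_iff_add_eq_zero.mp h1.symm
    have h4 : (2 : ℝ) • (∫ z : Fin d → ℝ, g0 z • z) = 0 := by
      rw [two_smul]; exact h3
    rcases smul_eq_zero.mp h4 with h | h
    · norm_num at h
    · exact h
  set L : (Fin d → ℝ) →L[ℝ] (Fin d → ℝ) :=
    LinearMap.toContinuousLinearMap (Matrix.mulVecLin V) with hL
  have hLapp : ∀ v : Fin d → ℝ, L v = V.mulVec v := fun v => rfl
  have int1 : Integrable (fun z : Fin d → ℝ => g0 z • V.mulVec z) := by
    have := L.integrable_comp hint.2
    refine this.congr ?_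
    filter_upwards with z
    simp only [Function.comp_apply, _root_.map_smul, hLapp, Matrix.mulVec_smul]
    rfl
  have main0 : (∫ z : Fin d → ℝ, g0 z • V.mulVec z) = 0 := by
    have h5 : (∫ z : Fin d → ℝ, g0 z • V.mulVec z) = L (∫ z : Fin d → ℝ, g0 z • z) := by
      rw [← L.integral_comp_comm hint.2]
      congr 1
      funext z
      simp only [_root_.map_smul, hLapp, Matrix.mulVec_smul]
      rfl
    rw [h5, hodd, map_zero]
  have transG : ∀ z : Fin d → ℝ, G (z + α') = g0 z := by
    intro z
    simp only [hG, hg0, add_sub_cancel_right]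
  have hGint : (∫ y : Fin d → ℝ, G y) = ∫ z : Fin d → ℝ, g0 z := by
    rw [← integral_add_right_eq_self G α']
    simp only [transG]
  have hmain : (∫ y : Fin d → ℝ, G y • V.mulVec y) = (∫ y : Fin d → ℝ, G y) • V.mulVec α' := by
    rw [← integral_add_right_eq_self (fun y => G y • V.mulVec y) α']
    simp only [transG, Matrix.mulVec_add, smul_add]
    rw [integral_add int1 (hint.1.smul_const (V.mulVec α')), main0, zero_add,
      integral_smul_const, hGint]
  calc (∫ y : Fin d → ℝ, (C * G y) • V.mulVec y)
      = ∫ y : Fin d → ℝ, C • (G y • V.mulVec y) := by simp only [mul_smul]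
    _ = C • ∫ y : Fin d → ℝ, G y • V.mulVec y := integral_smul C _
    _ = C • ((∫ y : Fin d → ℝ, G y) • V.mulVec α') := by rw [hmain]
    _ = (∫ y : Fin d → ℝ, C * G y) • V.mulVec α' := by
        rw [integral_const_mul, mul_smul]
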